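/- Let H be an arrangement with lattice of flats L_H, fix an ordering of I, and define the broken circuit sheaf R^{bc} on L_H with stalk at a flat F the face ring R[Δ^{bc}_{H_F}] of the broken circuit complex of the localization H_F, and restriction maps induced by the inclusions Δ^{bc}_{H_E} ⊆ Δ^{bc}_{H_F} for E ≤ F. Then for any open set U ⊆ L_H, the sections R^{bc}(U) are isomorphic to the face ring of the union ∪_{F∈U} Δ^{bc}_{H_F}. -/

import Mathlib

open MvPolynomial

set_option linter.unusedSectionVars false
set_option linter.unusedVariables false

variable {I : Type} [Fintype I] [DecidableEq I] [LinearOrder I]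

def IsFlat (V : AffineSubspace ℝ (I → ℝ)) (F : Finset I) : Prop :=
  ∃ x ∈ V, ∀ i : I, i ∈ F ↔ x i = 0

noncomputable def resF (V : AffineSubspace ℝ (I → ℝ)) (F : Finset I) :
    V.direction →ₗ[ℝ] ({i : I // i ∈ F} → ℝ) :=
  (LinearMap.funLeft ℝ ℝ (fun i : {i : I // i ∈ F} => (i : I))).comp V.direction.subtype

/-- `S` is a face of the matroid complex of the arrangement: the (linearized)
evaluation map `V₀ → ℝ^S` is surjective. -/
def Face (V : AffineSubspace ℝ (I → ℝ)) (S : Finset I) : Prop :=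
  Function.Surjective (resF V S)

/-- A circuit: a minimal non-face of the matroid complex. -/
def Circuit (V : AffineSubspace ℝ (I → ℝ)) (C : Finset I) : Prop :=
  ¬ Face V C ∧ ∀ D : Finset I, D ⊂ C → Face V D

/-- `S` is a face of the broken circuit complex `Δ^{bc}_{H_F}` of the localization of
the arrangement at the flat `F` (with respect to the fixed ordering of `I`): `S ⊆ F`,
`S` is a face of the matroid complex, and `S` contains no broken circuit, i.e. no set
`C ∖ {min C}` for a circuit `C ⊆ F`. -/
def BCFace (V : AffineSubspace ℝ (I → ℝ)) (F : Finset I) (S : Finset I) : Prop :=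
  S ⊆ F ∧ Face V S ∧
    ∀ C : Finset I, Circuit V C → C ⊆ F →
      ∀ m ∈ C, (∀ j ∈ C, m ≤ j) → ¬ C.erase m ⊆ S

noncomputable def faceIdeal (Δ : Set (Finset I)) : Ideal (MvPolynomial I ℝ) :=
  Ideal.span {p | ∃ S : Finset I, S ∉ Δ ∧ p = ∏ i ∈ S, (X i : MvPolynomial I ℝ)}

lemma aux_resF_apply (V : AffineSubspace ℝ (I → ℝ)) (S : Finset I) (v : V.direction)
    (i : {i : I // i ∈ S}) : resF V S v i = (v : I → ℝ) i := rfl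

lemma aux_face_mono (V : AffineSubspace ℝ (I → ℝ)) {S T : Finset I} (h : S ⊆ T)
    (hT : Face V T) : Face V S := by
  have hinj : Function.Injective
      (fun i : {i : I // i ∈ S} => (⟨i.1, h i.2⟩ : {i : I // i ∈ T})) := by
    intro a b hab
    exact Subtype.ext (by simpa using congrArg Subtype.val hab)
  have hsurj := LinearMap.funLeft_surjective_of_injective ℝ ℝ _ hinj
  have key : ⇑(resF V S) = ⇑(LinearMap.funLeft ℝ ℝ
      (fun i : {i : I // i ∈ S} => (⟨i.1, h i.2⟩ : {i : I // i ∈ T}))) ∘ ⇑(resF V T) := rfl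
  rw [Face, key]
  exact hsurj.comp hT

lemma aux_bcface_mono (V : AffineSubspace ℝ (I → ℝ)) {F S T : Finset I} (h : S ⊆ T)
    (hT : BCFace V F T) : BCFace V F S := by
  obtain ⟨h1, h2, h3⟩ := hT
  exact ⟨h.trans h1, aux_face_mono V h h2,
    fun C hC hCF m hm hmin hsub => h3 C hC hCF m hm hmin (hsub.trans h)⟩

lemma aux_bcface_inter (V : AffineSubspace ℝ (I → ℝ)) {F F' S : Finset I}
    (hF : BCFace V F S) (hS : S ⊆ F') : BCFace V (F ∩ F') S := by
  obtain ⟨h1, h2, h3⟩ := hF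
  exact ⟨Finset.subset_inter h1 hS, h2,
    fun C hC hCF m hm hmin => h3 C hC (hCF.trans Finset.inter_subset_left) m hm hmin⟩

lemma aux_faceIdeal_antitone {Δ₁ Δ₂ : Set (Finset I)} (h : Δ₁ ⊆ Δ₂) :
    faceIdeal Δ₂ ≤ faceIdeal Δ₁ := by
  apply Ideal.span_mono
  rintro p ⟨S, hS, rfl⟩
  exact ⟨S, fun hc => hS (h hc), rfl⟩

lemma aux_sum_single_apply (S : Finset I) (j : I) :
    (∑ i ∈ S, Finsupp.single i 1 : I →₀ ℕ) j = if j ∈ S then 1 else 0 := by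
  rw [Finset.sum_apply']
  simp [Finsupp.single_apply, Finset.sum_ite_eq]

lemma aux_support_sum_single (S : Finset I) :
    (∑ i ∈ S, Finsupp.single i 1 : I →₀ ℕ).support = S := by
  ext j
  rw [Finsupp.mem_support_iff, aux_sum_single_apply]
  by_cases h : j ∈ S <;> simp [h]

lemma aux_prod_X (S : Finset I) :
    (∏ i ∈ S, (X i : MvPolynomial I ℝ)) = monomial (∑ i ∈ S, Finsupp.single i 1) 1 := by
  classical
  induction S using Finset.induction_on with
  | empty => simp
  | insert _ _ h ih =>
    rw [Finset.prod_insert h, ih, Finset.sum_insert h, X, monomial_mul, one_mul]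

lemma aux_monomial_mem_faceIdeal {Δ : Set (Finset I)} {d : I →₀ ℕ} {a : ℝ}
    (h : ↑d.support ∉ Δ) : (monomial d a : MvPolynomial I ℝ) ∈ faceIdeal Δ := by
  have hgen : (∏ i ∈ d.support, (X i : MvPolynomial I ℝ)) ∈ faceIdeal Δ :=
    Ideal.subset_span ⟨d.support, h, rfl⟩
  have hle : (∑ i ∈ d.support, Finsupp.single i 1 : I →₀ ℕ) ≤ d := by
    intro j
    rw [aux_sum_single_apply]
    by_cases hj : j ∈ d.support
    · simpa [hj, Nat.one_le_iff_ne_zero] using Finsupp.mem_support_iff.mp hj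
    · simp [hj]
  have key : (monomial d a : MvPolynomial I ℝ) =
      (monomial (d - ∑ i ∈ d.support, Finsupp.single i 1) a) *
        (∏ i ∈ d.support, (X i : MvPolynomial I ℝ)) := by
    rw [aux_prod_X, monomial_mul, mul_one, tsub_add_cancel_of_le hle]
  rw [key]
  exact Ideal.mul_mem_left _ _ hgen

lemma aux_mem_faceIdeal {Δ : Set (Finset I)} {p : MvPolynomial I ℝ}
    (h : ∀ d ∈ p.support, ↑d.support ∉ Δ) : p ∈ faceIdeal Δ := by
  rw [p.as_sum]
  exact Ideal.sum_mem _ fun d hd => aux_monomial_mem_faceIdeal (h d hd)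

def DownClosed (Δ : Set (Finset I)) : Prop := ∀ S ∈ Δ, ∀ T : Finset I, T ⊆ S → T ∈ Δ

lemma aux_faceIdeal_le_good {Δ : Set (Finset I)} (hΔ : DownClosed Δ)
    {p : MvPolynomial I ℝ} (hp : p ∈ faceIdeal Δ) :
    ∀ d ∈ p.support, ↑d.support ∉ Δ := by
  classical
  let K : Ideal (MvPolynomial I ℝ) :=
  { carrier := {q : MvPolynomial I ℝ | ∀ d ∈ q.support, ↑d.support ∉ Δ}
    zero_mem' := by simp
    add_mem' := by
      intro a b ha hb d hd
      rcases Finset.mem_union.mp (MvPolynomial.support_add hd) with h | h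
      · exact ha d h
      · exact hb d h
    smul_mem' := by
      intro c q hq d hd
      have := MvPolynomial.support_mul c q hd
      rw [Finset.mem_add] at this
      obtain ⟨d₁, h₁, d₂, h₂, rfl⟩ := this
      intro hmem
      refine hq d₂ h₂ (hΔ _ hmem _ ?_)
      intro j hj
      rw [Finsupp.mem_support_iff] at hj ⊢
      simp only [Finsupp.add_apply]
      omega }
  have hle : faceIdeal Δ ≤ K := by
    rw [faceIdeal, Ideal.span_le]
    rintro q ⟨S, hS, rfl⟩ d hd
    rw [aux_prod_X] at hd
    have : d = ∑ i ∈ S, Finsupp.single i 1 := by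
      by_contra hne
      simp [MvPolynomial.support_monomial, Finset.mem_singleton] at hd
      exact hne hd
    rw [this, aux_support_sum_single]
    exact hS
  exact hle hp

noncomputable def trunc (Δ : Set (Finset I)) (p : MvPolynomial I ℝ) : MvPolynomial I ℝ :=
  ∑ d ∈ @Finset.filter _ (fun d => ↑d.support ∈ Δ) (Classical.decPred _) p.support,
    monomial d (coeff d p)

lemma aux_coeff_trunc_mem {Δ : Set (Finset I)} (p : MvPolynomial I ℝ) {e : I →₀ ℕ}
    (h : ↑e.support ∈ Δ) : coeff e (trunc Δ p) = coeff e p := by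
  classical
  rw [trunc, coeff_sum]
  rw [Finset.sum_congr rfl (fun d _ => coeff_monomial e d (coeff d p))]
  rw [Finset.sum_ite_eq']
  by_cases h2 : e ∈ p.support
  · simp [Finset.mem_filter, h, h2]
  · rw [MvPolynomial.notMem_support_iff] at h2
    simp [Finset.mem_filter, h2]

lemma aux_coeff_trunc_not {Δ : Set (Finset I)} (p : MvPolynomial I ℝ) {e : I →₀ ℕ}
    (h : ↑e.support ∉ Δ) : coeff e (trunc Δ p) = 0 := by
  classical
  rw [trunc, coeff_sum]
  rw [Finset.sum_congr rfl (fun d _ => coeff_monomial e d (coeff d p))]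
  rw [Finset.sum_ite_eq']
  simp [Finset.mem_filter, h]

lemma aux_trunc_support (Δ : Set (Finset I)) (p : MvPolynomial I ℝ) :
    ∀ d ∈ (trunc Δ p).support, ↑d.support ∈ Δ := by
  intro d hd
  rw [MvPolynomial.mem_support_iff] at hd
  by_contra h
  exact hd (aux_coeff_trunc_not p h)

lemma aux_sub_trunc_mem (Δ : Set (Finset I)) (p : MvPolynomial I ℝ) :
    p - trunc Δ p ∈ faceIdeal Δ := by
  apply aux_mem_faceIdeal
  intro d hd
  rw [MvPolynomial.mem_support_iff] at hd
  intro hmem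
  apply hd
  rw [coeff_sub, aux_coeff_trunc_mem p hmem, sub_self]

lemma aux_flat_closure {V : AffineSubspace ℝ (I → ℝ)} {E F C : Finset I} {m : I}
    (hEflat : IsFlat V E) (hFflat : IsFlat V F) (hC : Circuit V C) (hCF : C ⊆ F)
    (hm : m ∈ C) (hsub : C.erase m ⊆ E) : m ∈ E := by
  obtain ⟨xE, hxE, hxEiff⟩ := hEflat
  obtain ⟨xF, hxF, hxFiff⟩ := hFflat
  by_contra hmE
  have hxEm : xE m ≠ 0 := fun h => hmE ((hxEiff m).mpr h)
  apply hC.1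
  -- show Face V C
  intro g
  have hface : Face V (C.erase m) := hC.2 _ (Finset.erase_ssubset hm)
  obtain ⟨w, hw⟩ := hface (fun i => g ⟨i.1, Finset.erase_subset _ _ i.2⟩)
  have hvmem : xE - xF ∈ V.direction := by
    have := AffineSubspace.vsub_mem_direction hxE hxF
    simpa using this
  set v : V.direction := ⟨xE - xF, hvmem⟩ with hv
  refine ⟨w + ((g ⟨m, hm⟩ - (w : I → ℝ) m) / (xE m)) • v, ?_⟩
  funext i
  have hres : resF V C (w + ((g ⟨m, hm⟩ - (w : I → ℝ) m) / (xE m)) • v) i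
      = (w : I → ℝ) i.1 + ((g ⟨m, hm⟩ - (w : I → ℝ) m) / (xE m)) * (xE i.1 - xF i.1) := rfl
  rw [hres]
  have hxFi : xF i.1 = 0 := (hxFiff i.1).mp (hCF i.2)
  by_cases hi : i.1 = m
  · have : (i : {i : I // i ∈ C}) = ⟨m, hm⟩ := Subtype.ext hi
    rw [this]
    rw [hi] at hxFi
    rw [hxFi, sub_zero, div_mul_cancel₀ _ hxEm]
    ring
  · have hie : i.1 ∈ C.erase m := Finset.mem_erase.mpr ⟨hi, i.2⟩
    have hxEi : xE i.1 = 0 := (hxEiff i.1).mp (hsub hie)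
    have hwi : (w : I → ℝ) i.1 = g ⟨i.1, Finset.erase_subset _ _ hie⟩ := congrFun hw ⟨i.1, hie⟩
    rw [hxEi, hxFi, sub_zero, mul_zero, add_zero, hwi]

lemma aux_bcface_flat_mono {V : AffineSubspace ℝ (I → ℝ)} {E F S : Finset I}
    (hEflat : IsFlat V E) (hFflat : IsFlat V F) (hEF : E ⊆ F)
    (hS : BCFace V E S) : BCFace V F S := by
  obtain ⟨h1, h2, h3⟩ := hS
  refine ⟨h1.trans hEF, h2, ?_⟩
  intro C hC hCF m hm hmin hsub
  have hsubE : C.erase m ⊆ E := hsub.trans h1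
  have hmem : m ∈ E := aux_flat_closure hEflat hFflat hC hCF hm hsubE
  have hCE : C ⊆ E := by
    intro j hj
    by_cases hjm : j = m
    · rwa [hjm]
    · exact hsubE (Finset.mem_erase.mpr ⟨hjm, hj⟩)
  exact h3 C hC hCE m hm hmin hsub

lemma aux_flat_inter {V : AffineSubspace ℝ (I → ℝ)} {F F' : Finset I}
    (hF : IsFlat V F) (hF' : IsFlat V F') : IsFlat V (F ∩ F') := by
  obtain ⟨x, hx, hxiff⟩ := hF
  obtain ⟨y, hy, hyiff⟩ := hF'
  -- candidate points x + t • (y - x)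
  obtain ⟨t, ht⟩ := Finset.exists_notMem
    (Finset.univ.image (fun i : I => if y i = x i then (0:ℝ) else x i / (x i - y i)))
  have hdir : (y - x : I → ℝ) ∈ V.direction := by
    have := AffineSubspace.vsub_mem_direction hy hx
    simpa using this
  have hmem : (t • (y - x) + x : I → ℝ) ∈ V := by
    have := AffineSubspace.vadd_mem_of_mem_direction (V.direction.smul_mem t hdir) hx
    simpa using this
  refine ⟨t • (y - x) + x, hmem, ?_⟩
  intro i
  constructor
  · intro hi
    obtain ⟨hi1, hi2⟩ := Finset.mem_inter.mp hi
    have hx0 : x i = 0 := (hxiff i).mp hi1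
    have hy0 : y i = 0 := (hyiff i).mp hi2
    simp [hx0, hy0]
  · intro h0
    by_contra hi
    have h0' : t * (y i - x i) + x i = 0 := h0
    by_cases hcase : y i = x i
    · rw [hcase] at h0'
      have hx0 : x i = 0 := by linarith [h0']
      have hy0 : y i = 0 := by rw [hcase]; exact hx0
      exact hi (Finset.mem_inter.mpr ⟨(hxiff i).mpr hx0, (hyiff i).mpr hy0⟩)
    · have hne : x i - y i ≠ 0 := fun h => hcase (by linarith [h])
      have : t = x i / (x i - y i) := by
        field_simp
        linarith [h0']
      apply ht
      apply Finset.mem_image.mpr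
      exact ⟨i, Finset.mem_univ i, by rw [if_neg hcase, ← this]⟩

/-- The map from `ℝ[e_i : i ∈ I]` to the product over `F ∈ U` of the stalks
`R^{bc}(F) = ℝ[Δ^{bc}_{H_F}]` of the broken circuit sheaf. -/
noncomputable def toBCStalks (V : AffineSubspace ℝ (I → ℝ)) (U : Set (Finset I)) :
    MvPolynomial I ℝ →+*
      ((F : U) → MvPolynomial I ℝ ⧸ faceIdeal {S | BCFace V F.1 S}) :=
  Pi.ringHom fun F => Ideal.Quotient.mk (faceIdeal {S | BCFace V F.1 S})

/-- for any open (i.e. downward closed) set `U` in the lattice of flats,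
the sections `R^{bc}(U)` of the broken circuit sheaf are isomorphic to the face ring
of the union `⋃_{F ∈ U} Δ^{bc}_{H_F}`: the canonical map from `ℝ[e_i : i ∈ I]` to
compatible families of stalk elements has image exactly the sections (compatible
families, via the canonical factor maps) and kernel the face ideal of the union. -/
theorem stmt12 (V : AffineSubspace ℝ (I → ℝ))
    (hne : (V : Set (I → ℝ)).Nonempty)
    (U : Set (Finset I)) (hUflat : ∀ F ∈ U, IsFlat V F)
    (hUdown : ∀ E F : Finset I, IsFlat V E → E ⊆ F → F ∈ U → E ∈ U) :
    RingHom.ker (toBCStalks V U) = faceIdeal {S | ∃ F ∈ U, BCFace V F S} ∧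
    Set.range (toBCStalks V U) =
      {s | ∀ (E F : U) (h : E.1 ⊆ F.1)
          (hle : faceIdeal {S | BCFace V F.1 S} ≤ faceIdeal {S | BCFace V E.1 S}),
        Ideal.Quotient.factor hle (s F) = s E} := by
  classical
  have hdown : ∀ G : Finset I, DownClosed {S | BCFace V G S} :=
    fun G S hS T hT => aux_bcface_mono V hT hS
  constructor
  · ext p
    rw [RingHom.mem_ker]
    constructor
    · intro hp
      apply aux_mem_faceIdeal
      intro d hd hmem
      obtain ⟨F, hFU, hBC⟩ := hmem
      have h0 : Ideal.Quotient.mk (faceIdeal {S | BCFace V F S}) p = 0 :=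
        congrFun hp ⟨F, hFU⟩
      have hpF : p ∈ faceIdeal {S | BCFace V F S} :=
        (Ideal.Quotient.eq_zero_iff_mem).mp h0
      exact aux_faceIdeal_le_good (hdown F) hpF d hd hBC
    · intro hp
      funext F
      show Ideal.Quotient.mk (faceIdeal {S | BCFace V F.1 S}) p = 0
      rw [Ideal.Quotient.eq_zero_iff_mem]
      refine aux_faceIdeal_antitone ?_ hp
      intro S hS
      exact ⟨F.1, F.2, hS⟩
  · apply Set.Subset.antisymm
    · rintro _ ⟨p, rfl⟩ E F h hle
      exact Ideal.Quotient.factor_mk hle p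
    · intro s hs
      have hrep : ∀ F : U, ∃ r : MvPolynomial I ℝ,
          Ideal.Quotient.mk (faceIdeal {S | BCFace V F.1 S}) r = s F :=
        fun F => Ideal.Quotient.mk_surjective (s F)
      choose q hq using hrep
      set pF : U → MvPolynomial I ℝ := fun F => trunc {S | BCFace V F.1 S} (q F) with hpFdef
      have hpFmk : ∀ F : U,
          Ideal.Quotient.mk (faceIdeal {S | BCFace V F.1 S}) (pF F) = s F := by
        intro F
        have hmem := (faceIdeal {S | BCFace V F.1 S}).neg_mem
          (aux_sub_trunc_mem {S | BCFace V F.1 S} (q F))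
        rw [neg_sub] at hmem
        exact (Ideal.Quotient.eq.mpr hmem).trans (hq F)
      have hEkey : ∀ (F F' : U) (d : I →₀ ℕ),
          BCFace V F.1 ↑d.support → BCFace V F'.1 ↑d.support →
          coeff d (pF F) = coeff d (pF F') := by
        intro F F' d hdF hdF'
        set E : Finset I := F.1 ∩ F'.1 with hEdef
        have hEflat : IsFlat V E := aux_flat_inter (hUflat F.1 F.2) (hUflat F'.1 F'.2)
        have hEU : E ∈ U := hUdown E F.1 hEflat Finset.inter_subset_left F.2
        have hleF : faceIdeal {S | BCFace V F.1 S} ≤ faceIdeal {S | BCFace V E S} :=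
          aux_faceIdeal_antitone (fun S hS =>
            aux_bcface_flat_mono hEflat (hUflat F.1 F.2) Finset.inter_subset_left hS)
        have hleF' : faceIdeal {S | BCFace V F'.1 S} ≤ faceIdeal {S | BCFace V E S} :=
          aux_faceIdeal_antitone (fun S hS =>
            aux_bcface_flat_mono hEflat (hUflat F'.1 F'.2) Finset.inter_subset_right hS)
        have h1 : Ideal.Quotient.mk (faceIdeal {S | BCFace V E S}) (pF F) = s ⟨E, hEU⟩ := by
          have hcomp := hs ⟨E, hEU⟩ F Finset.inter_subset_left hleF
          rw [← hcomp, ← hpFmk F, Ideal.Quotient.factor_mk]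
        have h2 : Ideal.Quotient.mk (faceIdeal {S | BCFace V E S}) (pF F') = s ⟨E, hEU⟩ := by
          have hcomp := hs ⟨E, hEU⟩ F' Finset.inter_subset_right hleF'
          rw [← hcomp, ← hpFmk F', Ideal.Quotient.factor_mk]
        have hsubmem : pF F - pF F' ∈ faceIdeal {S | BCFace V E S} :=
          Ideal.Quotient.eq.mp (h1.trans h2.symm)
        have hdE : BCFace V E ↑d.support := aux_bcface_inter V hdF hdF'.1
        by_contra hne
        have hmem : d ∈ (pF F - pF F').support := by
          rw [MvPolynomial.mem_support_iff, coeff_sub]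
          exact sub_ne_zero_of_ne hne
        exact aux_faceIdeal_le_good (hdown E) hsubmem d hmem hdE
      haveI : Fintype U := (Set.toFinite U).fintype
      set T : Finset (I →₀ ℕ) := Finset.univ.biUnion (fun F : U => (pF F).support) with hTdef
      set c : (I →₀ ℕ) → ℝ := fun d =>
        if h : ∃ F : U, BCFace V F.1 ↑d.support then coeff d (pF h.choose) else 0 with hcdef
      set p : MvPolynomial I ℝ := ∑ d ∈ T, monomial d (c d) with hpdef
      have hcoeffp : ∀ e, coeff e p = if e ∈ T then c e else 0 := by
        intro e
        rw [hpdef, coeff_sum, Finset.sum_congr rfl (fun d _ => coeff_monomial e d (c d)),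
          Finset.sum_ite_eq']
      have hdiff : ∀ F : U, p - pF F ∈ faceIdeal {S | BCFace V F.1 S} := by
        intro F
        apply aux_mem_faceIdeal
        intro e he hmem
        rw [MvPolynomial.mem_support_iff] at he
        apply he
        rw [coeff_sub, hcoeffp]
        have hex : ∃ F' : U, BCFace V F'.1 ↑e.support := ⟨F, hmem⟩
        have hce : c e = coeff e (pF F) := by
          rw [hcdef]
          simp only [dif_pos hex]
          exact hEkey hex.choose F e hex.choose_spec hmem
        by_cases heT : e ∈ T
        · rw [if_pos heT, hce, sub_self]
        · rw [if_neg heT]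
          have h0 : coeff e (pF F) = 0 := by
            by_contra hc0
            exact heT (Finset.mem_biUnion.mpr
              ⟨F, Finset.mem_univ F, MvPolynomial.mem_support_iff.mpr hc0⟩)
          rw [h0, sub_zero]
      refine ⟨p, ?_⟩
      funext F
      show Ideal.Quotient.mk (faceIdeal {S | BCFace V F.1 S}) p = s F
      rw [← hpFmk F]
      exact Ideal.Quotient.eq.mpr (hdiff F)
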